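/- arXiv:1812.11882 — 3 statements merged into one kernel-verified Lean document; each statement's English description precedes it below -/
import Mathlib

section
/- Let H be a factorial commutative cancellative monoid and M a submonoid of H containing every unit of H. Then every element of M that is square-free in M is square-free in H, if and only if, there exists a set B of non-unit square-free elements of H that are pairwise relatively prime in H, such that M is the submonoid of H generated by B together with all units of H. -/
namespace SF12

variable {H : Type*} [CancelCommMonoid H]

/-- "prime" predicate in a monoid without zero -/
def Pr (p : H) : Prop := ¬ IsUnit p ∧ ∀ b c : H, p ∣ b * c → p ∣ b ∨ p ∣ c

theorem Pr.not_unit {p : H} (h : Pr p) : ¬ IsUnit p := h.1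

theorem Pr.dvd_or_dvd {p b c : H} (h : Pr p) (hd : p ∣ b * c) : p ∣ b ∨ p ∣ c := h.2 b c hd

theorem Pr.dvd_of_dvd_unit_mul {p u w : H} (hp : Pr p) (hu : IsUnit u) (h : p ∣ u * w) :
    p ∣ w := by
  rcases hp.dvd_or_dvd h with h' | h'
  · exact absurd (isUnit_of_dvd_unit h' hu) hp.not_unit
  · exact h'

theorem Pr.exists_mem_of_dvd_prod {p : H} (hp : Pr p) :
    ∀ {l : Multiset H}, p ∣ l.prod → ∃ q ∈ l, p ∣ q := by
  intro l
  induction l using Multiset.induction_on with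
  | empty =>
    intro h
    simp only [Multiset.prod_zero] at h
    exact absurd (isUnit_of_dvd_one h) hp.not_unit
  | cons a s ih =>
    intro h
    rw [Multiset.prod_cons] at h
    rcases hp.dvd_or_dvd h with h' | h'
    · exact ⟨a, Multiset.mem_cons_self a s, h'⟩
    · obtain ⟨q, hq, hpq⟩ := ih h'
      exact ⟨q, Multiset.mem_cons_of_mem hq, hpq⟩

/-- a nonunit has a prime factor with cofactor -/
theorem exists_pr_mul (hfact : ∀ a : H, IsUnit a ∨ ∃ l : Multiset H, (∀ p ∈ l, Pr p) ∧ l.prod = a)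
    {c : H} (hc : ¬ IsUnit c) : ∃ p c₁, Pr p ∧ c = p * c₁ := by
  rcases hfact c with h | ⟨l, hl, hprod⟩
  · exact absurd h hc
  rcases Multiset.empty_or_exists_mem l with rfl | ⟨p, hp⟩
  · exact absurd (hprod ▸ isUnit_one) hc
  obtain ⟨l', rfl⟩ := Multiset.exists_cons_of_mem hp
  exact ⟨p, l'.prod, hl p hp, by rw [← hprod, Multiset.prod_cons]⟩

theorem Pr.unit_of_prime_eq_mul {p q w : H} (hp : Pr p) (hq : Pr q) (h : q = p * w) :
    IsUnit w := by
  rcases hq.dvd_or_dvd (show q ∣ p * w from h ▸ dvd_refl q) with h' | h'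
  · obtain ⟨t, ht⟩ := h'
    have key : q * 1 = q * (t * w) := by
      rw [mul_one]
      calc q = p * w := h
        _ = q * t * w := by rw [ht]
        _ = q * (t * w) := mul_assoc q t w
    exact IsUnit.of_mul_eq_one (a := w) t (by rw [mul_comm]; exact (mul_left_cancel key).symm)
  · obtain ⟨s, hs⟩ := h'
    exfalso
    apply hp.not_unit
    have key : q * 1 = q * (s * p) := by
      rw [mul_one]
      calc q = p * (q * s) := by rw [← hs, ← h]
        _ = q * (s * p) := by ac_rfl
    exact IsUnit.of_mul_eq_one (a := p) s (by rw [mul_comm]; exact (mul_left_cancel key).symm)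

/-- a prime is squarefree -/
theorem Pr.squarefree {p : H} (hp : Pr p) : Squarefree p := by
  intro x hx
  have hxp : x ∣ p := (dvd_mul_right x x).trans hx
  obtain ⟨s, hs⟩ := hxp
  by_contra hxu
  rcases hp.dvd_or_dvd (show p ∣ x * s from hs ▸ dvd_refl p) with h' | h'
  · -- p ∣ x, so x = p k, then p = p*k*p*k*m contradiction
    obtain ⟨k, hk⟩ := h'
    obtain ⟨m, hm⟩ := hx
    have key : p * 1 = p * (k * p * k * m) := by
      rw [mul_one]
      calc p = x * x * m := hm
        _ = (p * k) * (p * k) * m := by rw [hk]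
        _ = p * (k * p * k * m) := by ac_rfl
    have h1 : (1 : H) = k * p * k * m := mul_left_cancel key
    exact hp.not_unit (isUnit_of_mul_isUnit_right
      (isUnit_of_mul_isUnit_left (isUnit_of_mul_isUnit_left
        (show IsUnit (k * p * k * m) from h1 ▸ isUnit_one))))
  · obtain ⟨r, hr⟩ := h'
    have key : p * 1 = p * (x * r) := by
      rw [mul_one]
      calc p = x * s := hs
        _ = x * (p * r) := by rw [hr]
        _ = p * (x * r) := by ac_rfl
    exact hxu (IsUnit.of_mul_eq_one (a := x) r (mul_left_cancel key).symm)

/-- any non-multiple of a prime is relatively prime to it -/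
theorem Pr.isRelPrime {p w : H} (hp : Pr p) (hw : ¬ p ∣ w) : IsRelPrime p w := by
  intro t htp htw
  by_contra htu
  obtain ⟨s, hs⟩ := htp
  rcases hp.dvd_or_dvd (show p ∣ t * s from hs ▸ dvd_refl p) with h' | h'
  · exact hw (h'.trans htw)
  · obtain ⟨r, hr⟩ := h'
    have key : p * 1 = p * (r * t) := by
      rw [mul_one]
      calc p = t * (p * r) := by rw [← hr, ← hs]
        _ = p * (r * t) := by ac_rfl
    exact htu (IsUnit.of_mul_eq_one (a := t) r (by rw [mul_comm]; exact (mul_left_cancel key).symm))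

variable (hfact : ∀ a : H, IsUnit a ∨ ∃ l : Multiset H, (∀ p ∈ l, Pr p) ∧ l.prod = a)

include hfact

/-- product of coprime squarefrees is squarefree -/
theorem sf_mul {b x : H} (hb : Squarefree b) (hx : Squarefree x) (hbx : IsRelPrime b x) :
    Squarefree (b * x) := by
  intro y hy
  by_contra hyu
  obtain ⟨p, y₁, hp, rfl⟩ := exists_pr_mul hfact hyu
  have hpd : p * p ∣ b * x := (mul_dvd_mul (dvd_mul_right p y₁) (dvd_mul_right p y₁)).trans hy
  have hone : p ∣ b * x := (dvd_mul_right p p).trans hpd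
  -- symmetric core argument
  have core : ∀ b x : H, Squarefree b → Squarefree x → IsRelPrime b x →
      p * p ∣ b * x → p ∣ b → False := by
    intro b x hb hx hbx hpd hpb
    have hpx : ¬ p ∣ x := fun h => hp.not_unit (hbx hpb h)
    obtain ⟨b₁, rfl⟩ := hpb
    have hpb₁ : ¬ p ∣ b₁ := fun ⟨k, hk⟩ => hp.not_unit (hb p ⟨k, by rw [hk]; ac_rfl⟩)
    obtain ⟨c, hc⟩ := hpd
    have key : p * (b₁ * x) = p * (p * c) := by
      calc p * (b₁ * x) = p * b₁ * x := (mul_assoc ..).symm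
        _ = p * p * c := hc
        _ = p * (p * c) := mul_assoc ..
    have : b₁ * x = p * c := mul_left_cancel key
    rcases hp.dvd_or_dvd (show p ∣ b₁ * x from this ▸ dvd_mul_right p c) with h | h
    · exact hpb₁ h
    · exact hpx h
  rcases hp.dvd_or_dvd hone with h | h
  · exact core b x hb hx hbx hpd h
  · exact core x b hx hb hbx.symm (by rwa [mul_comm x b]) h

theorem isRelPrime_of_no_common_pr {s t : H} (h : ∀ p, Pr p → p ∣ s → p ∣ t → False) :
    IsRelPrime s t := by
  intro d hds hdt
  by_contra hdu
  obtain ⟨p, d₁, hp, rfl⟩ := exists_pr_mul hfact hdu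
  exact h p hp ((dvd_mul_right p d₁).trans hds) ((dvd_mul_right p d₁).trans hdt)

/-- key division lemma: if c * e = u * l.prod with l primes, then e is a unit times a
sub-multiset product, strictly smaller if c is not a unit. -/
theorem div_lemma : ∀ n : ℕ, ∀ l : Multiset H, (∀ p ∈ l, Pr p) → Multiset.card l ≤ n →
    ∀ u c e : H, IsUnit u → c * e = u * l.prod →
    ∃ (l₁ : Multiset H) (u₁ : H), l₁ ≤ l ∧ IsUnit u₁ ∧ e = u₁ * l₁.prod ∧
      (¬ IsUnit c → Multiset.card l₁ < Multiset.card l) := by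
  intro n
  induction n with
  | zero =>
    intro l hl hcard u c e hu heq
    have hl0 : l = 0 := Multiset.card_eq_zero.mp (Nat.le_zero.mp hcard)
    subst hl0
    simp only [Multiset.prod_zero, mul_one] at heq
    have hc : IsUnit c := isUnit_of_mul_isUnit_left (heq ▸ hu)
    refine ⟨0, (hc.unit⁻¹ : Hˣ) * u, le_refl 0, (Units.isUnit _).mul hu, ?_, fun h => absurd hc h⟩
    have key : c * e = c * (↑hc.unit⁻¹ * u * Multiset.prod 0) := by
      simp only [Multiset.prod_zero, mul_one]
      calc c * e = u := heq
        _ = (c * ↑hc.unit⁻¹) * u := by rw [IsUnit.mul_val_inv, one_mul]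
        _ = c * (↑hc.unit⁻¹ * u) := mul_assoc ..
    exact mul_left_cancel key
  | succ n ih =>
    intro l hl hcard u c e hu heq
    by_cases hc : IsUnit c
    · refine ⟨l, (hc.unit⁻¹ : Hˣ) * u, le_refl l, (Units.isUnit _).mul hu, ?_, fun h => absurd hc h⟩
      have key : c * e = c * (↑hc.unit⁻¹ * u * l.prod) := by
        calc c * e = u * l.prod := heq
          _ = (c * ↑hc.unit⁻¹) * (u * l.prod) := by rw [IsUnit.mul_val_inv, one_mul]
          _ = c * (↑hc.unit⁻¹ * u * l.prod) := by rw [mul_assoc, mul_assoc]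
      exact mul_left_cancel key
    · obtain ⟨p, c₁, hp, rfl⟩ := exists_pr_mul hfact hc
      have hpl : p ∣ l.prod := by
        apply hp.dvd_of_dvd_unit_mul hu
        exact heq ▸ (dvd_mul_right p c₁).mul_right e
      obtain ⟨q, hq, hpq⟩ := hp.exists_mem_of_dvd_prod hpl
      obtain ⟨w, hw⟩ := hpq
      have hwu : IsUnit w := hp.unit_of_prime_eq_mul (hl q hq) hw
      obtain ⟨l', rfl⟩ := Multiset.exists_cons_of_mem hq
      have key : p * (c₁ * e) = p * (u * w * l'.prod) := by
        calc p * (c₁ * e) = p * c₁ * e := (mul_assoc ..).symm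
          _ = u * ((p * w) * l'.prod) := by rw [heq, Multiset.prod_cons, hw]
          _ = p * (u * w * l'.prod) := by ac_rfl
      have heq' : c₁ * e = (u * w) * l'.prod := mul_left_cancel key
      have hcard' : Multiset.card l' ≤ n := by
        have := Multiset.card_cons q l' ▸ hcard
        omega
      obtain ⟨l₁, u₁, hle, hu₁, he₁, _⟩ :=
        ih l' (fun p hp => hl p (Multiset.mem_cons_of_mem hp)) hcard' (u * w) c₁ e
          (hu.mul hwu) heq'
      refine ⟨l₁, u₁, le_trans hle (Multiset.le_cons_self l' q), hu₁, he₁, fun _ => ?_⟩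
      rw [Multiset.card_cons]
      exact Nat.lt_succ_of_le (Multiset.card_le_card hle)

omit hfact in
/-- `a` is a unit times a product of at most `n` primes -/
theorem fact_def : True := trivial

end SF12

namespace SF12

variable {H : Type*} [CancelCommMonoid H]

def Fact (n : ℕ) (a : H) : Prop :=
  ∃ (l : Multiset H) (u : H), (∀ p ∈ l, Pr p) ∧ IsUnit u ∧ a = u * l.prod ∧ Multiset.card l ≤ n

theorem exists_fact (hfact : ∀ a : H, IsUnit a ∨ ∃ l : Multiset H, (∀ p ∈ l, Pr p) ∧ l.prod = a)
    (a : H) : ∃ n, Fact n a := by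
  rcases hfact a with h | ⟨l, hl, hprod⟩
  · exact ⟨0, 0, a, by simp, h, by simp, by simp⟩
  · exact ⟨Multiset.card l, l, 1, hl, isUnit_one, by rw [one_mul, hprod], le_refl _⟩

theorem Fact.of_mul_left (hfact : ∀ a : H, IsUnit a ∨ ∃ l : Multiset H, (∀ p ∈ l, Pr p) ∧ l.prod = a)
    {n : ℕ} {c e : H} (h : Fact n (c * e)) (hc : ¬ IsUnit c) :
    ∃ m, m < n ∧ Fact m e := by
  obtain ⟨l, u, hl, hu, heq, hcard⟩ := h
  obtain ⟨l₁, u₁, hle, hu₁, he₁, hlt⟩ := div_lemma hfact (Multiset.card l) l hl (le_refl _) u c e hu heq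
  refine ⟨Multiset.card l₁, lt_of_lt_of_le (hlt hc) hcard, l₁, u₁,
    fun p hp => hl p (Multiset.mem_of_le hle hp), hu₁, he₁, le_refl _⟩

end SF12

namespace SF12

variable {H : Type*} [CancelCommMonoid H]
variable (hfact : ∀ a : H, IsUnit a ∨ ∃ l : Multiset H, (∀ p ∈ l, Pr p) ∧ l.prod = a)
include hfact

theorem d_dvd_aux : ∀ (l : Multiset H), (∀ p ∈ l, Pr p) → ∀ (u d a a' : H), IsUnit u →
    d = u * l.prod → Squarefree a → Squarefree a' → d * d ∣ a * a' →
    Squarefree d ∧ d ∣ a ∧ d ∣ a' := by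
  intro l
  induction l using Multiset.induction_on with
  | empty =>
    intro _ u d a a' hu hd _ _ _
    simp only [Multiset.prod_zero, mul_one] at hd
    subst hd
    exact ⟨hu.squarefree, hu.dvd, hu.dvd⟩
  | cons p s ihs =>
    intro hl u d a a' hu hd ha ha' hdvd
    have hp : Pr p := hl p (Multiset.mem_cons_self p s)
    have hs : ∀ q ∈ s, Pr q := fun q hq => hl q (Multiset.mem_cons_of_mem hq)
    set d' := u * s.prod with hd'
    have hdpd' : d = p * d' := by
      rw [hd, Multiset.prod_cons, hd']; ac_rfl
    have core : ∀ a a' : H, Squarefree a → Squarefree a' → d * d ∣ a * a' → p ∣ a →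
        Squarefree d ∧ d ∣ a ∧ d ∣ a' := by
      intro a a' ha ha' hdvd hpa
      obtain ⟨a₁, rfl⟩ := hpa
      have hpa₁ : ¬ p ∣ a₁ := fun ⟨k, hk⟩ => hp.not_unit (ha p ⟨k, by rw [hk]; ac_rfl⟩)
      obtain ⟨c, hc⟩ := hdvd
      have key1 : p * (a₁ * a') = p * (p * (d' * d' * c)) := by
        calc p * (a₁ * a') = (p * a₁) * a' := (mul_assoc ..).symm
          _ = d * d * c := hc
          _ = (p * d') * (p * d') * c := by rw [hdpd']
          _ = p * (p * (d' * d' * c)) := by ac_rfl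
      have key1' : a₁ * a' = p * (d' * d' * c) := mul_left_cancel key1
      have hpa' : p ∣ a' := by
        rcases hp.dvd_or_dvd (show p ∣ a₁ * a' from key1' ▸ dvd_mul_right _ _) with h | h
        · exact absurd h hpa₁
        · exact h
      obtain ⟨a₁', rfl⟩ := hpa'
      have key2 : (p * p) * (a₁ * a₁') = (p * p) * (d' * d' * c) := by
        calc (p * p) * (a₁ * a₁') = p * (a₁ * (p * a₁')) := by ac_rfl
          _ = p * (p * (d' * d' * c)) := key1
          _ = (p * p) * (d' * d' * c) := by ac_rfl
      have key2' : a₁ * a₁' = d' * d' * c := mul_left_cancel key2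
      have ha₁ : Squarefree a₁ := ha.squarefree_of_dvd (dvd_mul_left a₁ p)
      have ha₁' : Squarefree a₁' := ha'.squarefree_of_dvd (dvd_mul_left a₁' p)
      obtain ⟨hsfd', hd'a₁, hd'a₁'⟩ := ihs hs u d' a₁ a₁' hu rfl ha₁ ha₁' ⟨c, key2'⟩
      have hpd' : ¬ p ∣ d' := fun h => hpa₁ (h.trans hd'a₁)
      refine ⟨?_, ?_, ?_⟩
      · rw [hdpd']
        exact sf_mul hfact hp.squarefree hsfd' (hp.isRelPrime hpd')
      · rw [hdpd']
        exact mul_dvd_mul_left p hd'a₁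
      · rw [hdpd']
        exact mul_dvd_mul_left p hd'a₁'
    have hpaa' : p ∣ a * a' := by
      have : p ∣ d := hdpd' ▸ dvd_mul_right p d'
      exact (this.trans (dvd_mul_right d d)).trans hdvd
    rcases hp.dvd_or_dvd hpaa' with h | h
    · exact core a a' ha ha' hdvd h
    · obtain ⟨h1, h2, h3⟩ := core a' a ha' ha (by rwa [mul_comm a' a]) h
      exact ⟨h1, h3, h2⟩

theorem d_dvd {d a a' : H} (ha : Squarefree a) (ha' : Squarefree a')
    (hdvd : d * d ∣ a * a') : Squarefree d ∧ d ∣ a ∧ d ∣ a' := by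
  rcases hfact d with h | ⟨l, hl, hprod⟩
  · exact ⟨h.squarefree, h.dvd, h.dvd⟩
  · exact d_dvd_aux hfact l hl 1 d a a' isUnit_one (by rw [one_mul, hprod]) ha ha' hdvd


variable (M : Submonoid H) (hunits : ∀ u : H, IsUnit u → u ∈ M)
variable (hsf : ∀ a ∈ M, (¬ ∃ b c : H, b ∈ M ∧ c ∈ M ∧ ¬ IsUnit b ∧ a = b ^ 2 * c) →
      Squarefree a)

include hunits hsf in
theorem lemma_B : ∀ n : ℕ, ∀ b x : H, Fact n b → Squarefree b → Squarefree x →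
    IsRelPrime b x → b * b * x ∈ M → b ∈ M ∧ x ∈ M := by
  intro n
  induction n using Nat.strong_induction_on with
  | _ n ih =>
    intro b x hF hb hx hbx hmem
    by_cases hbu : IsUnit b
    · refine ⟨hunits b hbu, ?_⟩
      obtain ⟨v, rfl⟩ := hbu
      have hxeq : x = ↑v⁻¹ * (↑v⁻¹ * (↑v * ↑v * x)) := by
        simp [mul_assoc]
      rw [hxeq]
      exact M.mul_mem (hunits _ (Units.isUnit _)) (M.mul_mem (hunits _ (Units.isUnit _)) hmem)
    · have hnsf : ¬ Squarefree (b * b * x) := fun h => hbu (h b (dvd_mul_right (b * b) x))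
      obtain ⟨d, c, hdM, hcM, hdu, heq⟩ := not_not.mp (mt (hsf _ hmem) hnsf)
      rw [pow_two] at heq
      have hdd : d * d ∣ b * (b * x) := ⟨c, by rw [← mul_assoc]; exact heq⟩
      obtain ⟨hsfd, hdb, -⟩ := d_dvd hfact hb (sf_mul hfact hb hx hbx) hdd
      obtain ⟨b₁, rfl⟩ := hdb
      have key : (d * d) * (b₁ * b₁ * x) = (d * d) * c := by
        calc (d * d) * (b₁ * b₁ * x) = (d * b₁) * (d * b₁) * x := by ac_rfl
          _ = (d * d) * c := heq
      have hceq : c = b₁ * b₁ * x := (mul_left_cancel key).symm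
      obtain ⟨m, hm, hFm⟩ := Fact.of_mul_left hfact hF hdu
      have hb₁ : Squarefree b₁ := hb.squarefree_of_dvd (dvd_mul_left b₁ d)
      have hb₁x : IsRelPrime b₁ x := fun t ht1 ht2 => hbx (ht1.trans (dvd_mul_left b₁ d)) ht2
      obtain ⟨hb₁M, hxM⟩ := ih m hm b₁ x hFm hb₁ hx hb₁x (hceq ▸ hcM)
      exact ⟨M.mul_mem hdM hb₁M, hxM⟩


def IsMAtom (M : Submonoid H) (a : H) : Prop :=
  a ∈ M ∧ ¬ IsUnit a ∧ ∀ c d : H, c ∈ M → d ∈ M → a = c * d → IsUnit c ∨ IsUnit d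

omit hfact in
include hsf in
theorem atom_sf {a : H} (h : IsMAtom M a) : Squarefree a := by
  apply hsf a h.1
  rintro ⟨b, c, hbM, hcM, hbu, heq⟩
  rcases h.2.2 b (b * c) hbM (M.mul_mem hbM hcM) (by rw [heq, pow_two, mul_assoc]) with h' | h'
  · exact hbu h'
  · exact hbu (isUnit_of_mul_isUnit_left h')

theorem gcd_sf : ∀ n : ℕ, ∀ a a' : H, Fact n a → Squarefree a → Squarefree a' →
    ∃ g x y : H, a = g * x ∧ a' = g * y ∧ IsRelPrime x y := by
  intro n
  induction n using Nat.strong_induction_on with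
  | _ n ih =>
    intro a a' hF ha ha'
    by_cases h : IsRelPrime a a'
    · exact ⟨1, a, a', (one_mul a).symm, (one_mul a').symm, h⟩
    · simp only [IsRelPrime, not_forall] at h
      obtain ⟨t, ht, ht', htu⟩ := h
      obtain ⟨p, t₁, hp, rfl⟩ := exists_pr_mul hfact htu
      obtain ⟨a₁, rfl⟩ := (dvd_mul_right p t₁).trans ht
      obtain ⟨a₁', rfl⟩ := (dvd_mul_right p t₁).trans ht'
      obtain ⟨m, hm, hFm⟩ := Fact.of_mul_left hfact hF hp.not_unit
      obtain ⟨g₁, x, y, h1, h2, hxy⟩ := ih m hm a₁ a₁' hFm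
        (ha.squarefree_of_dvd (dvd_mul_left a₁ p)) (ha'.squarefree_of_dvd (dvd_mul_left a₁' p))
      exact ⟨p * g₁, x, y, by rw [h1, mul_assoc], by rw [h2, mul_assoc], hxy⟩

include hunits hsf in
theorem atoms_relprime {a a' : H} (hA : IsMAtom M a) (hA' : IsMAtom M a')
    (hna : ¬ Associated a a') : IsRelPrime a a' := by
  have ha : Squarefree a := atom_sf M hsf hA
  have ha' : Squarefree a' := atom_sf M hsf hA'
  obtain ⟨n, hF⟩ := exists_fact hfact a
  obtain ⟨g, x, y, hax, ha'y, hxy⟩ := gcd_sf hfact n a a' hF ha ha'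
  by_cases hgu : IsUnit g
  · -- g is a unit: a ~ x, a' ~ y, x ⊥ y
    obtain ⟨v, rfl⟩ := hgu
    intro s hs hs'
    apply hxy
    · obtain ⟨r, hr⟩ := hs
      exact ⟨↑v⁻¹ * r, by rw [← mul_assoc, mul_comm s, mul_assoc, ← hr, hax]; simp [← mul_assoc]⟩
    · obtain ⟨r, hr⟩ := hs'
      exact ⟨↑v⁻¹ * r, by rw [← mul_assoc, mul_comm s, mul_assoc, ← hr, ha'y]; simp [← mul_assoc]⟩
  · exfalso
    have hx : Squarefree x := ha.squarefree_of_dvd (hax ▸ dvd_mul_left x g)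
    have hy : Squarefree y := ha'.squarefree_of_dvd (ha'y ▸ dvd_mul_left y g)
    have hg : Squarefree g := ha.squarefree_of_dvd (hax ▸ dvd_mul_right g x)
    have hgx : IsRelPrime g x := fun s h1 h2 => ha s (hax ▸ mul_dvd_mul h1 h2)
    have hgy : IsRelPrime g y := fun s h1 h2 => ha' s (ha'y ▸ mul_dvd_mul h1 h2)
    have hgxy : IsRelPrime g (x * y) := by
      apply isRelPrime_of_no_common_pr hfact
      intro p hp hpg hpxy
      rcases hp.dvd_or_dvd hpxy with h | h
      · exact hp.not_unit (hgx hpg h)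
      · exact hp.not_unit (hgy hpg h)
    have hsxy : Squarefree (x * y) := sf_mul hfact hx hy hxy
    have haa'M : g * g * (x * y) ∈ M := by
      have : a * a' = g * g * (x * y) := by rw [hax, ha'y]; ac_rfl
      exact this ▸ M.mul_mem hA.1 hA'.1
    obtain ⟨n₂, hFg⟩ := exists_fact hfact g
    obtain ⟨hgM, hxyM⟩ := lemma_B hfact M hunits hsf n₂ g (x * y) hFg hg hsxy hgxy haa'M
    -- x ∈ M
    have hxgy : IsRelPrime x (g * y) := by
      apply isRelPrime_of_no_common_pr hfact
      intro p hp hpx hpgy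
      rcases hp.dvd_or_dvd hpgy with h | h
      · exact hp.not_unit (hgx h hpx)
      · exact hp.not_unit (hxy hpx h)
    have hm1 : x * x * (g * y) ∈ M := by
      have : a * (x * y) = x * x * (g * y) := by rw [hax]; ac_rfl
      exact this ▸ M.mul_mem hA.1 hxyM
    obtain ⟨n₃, hFx⟩ := exists_fact hfact x
    obtain ⟨hxM, -⟩ := lemma_B hfact M hunits hsf n₃ x (g * y) hFx hx
      (sf_mul hfact hg hy hgy) hxgy hm1
    -- y ∈ M
    have hygx : IsRelPrime y (g * x) := by
      apply isRelPrime_of_no_common_pr hfact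
      intro p hp hpy hpgx
      rcases hp.dvd_or_dvd hpgx with h | h
      · exact hp.not_unit (hgy h hpy)
      · exact hp.not_unit (hxy h hpy)
    have hm2 : y * y * (g * x) ∈ M := by
      have : a' * (x * y) = y * y * (g * x) := by rw [ha'y]; ac_rfl
      exact this ▸ M.mul_mem hA'.1 hxyM
    obtain ⟨n₄, hFy⟩ := exists_fact hfact y
    obtain ⟨hyM, -⟩ := lemma_B hfact M hunits hsf n₄ y (g * x) hFy hy
      (sf_mul hfact hg hx hgx) hygx hm2
    -- conclude: x and y are units
    have hxu : IsUnit x := by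
      rcases hA.2.2 g x hgM hxM hax with h | h
      · exact absurd h hgu
      · exact h
    have hyu : IsUnit y := by
      rcases hA'.2.2 g y hgM hyM ha'y with h | h
      · exact absurd h hgu
      · exact h
    have h1 : Associated g a := ⟨hxu.unit, by rw [IsUnit.unit_spec]; exact hax.symm⟩
    have h2 : Associated g a' := ⟨hyu.unit, by rw [IsUnit.unit_spec]; exact ha'y.symm⟩
    exact hna (h1.symm.trans h2)

omit hunits hsf in
theorem mem_closure_atoms : ∀ n : ℕ, ∀ a : H, Fact n a → a ∈ M →
    a ∈ Submonoid.closure ({b : H | IsMAtom M b} ∪ {u : H | IsUnit u}) := by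
  intro n
  induction n using Nat.strong_induction_on with
  | _ n ih =>
    intro a hF haM
    by_cases hau : IsUnit a
    · exact Submonoid.subset_closure (Or.inr hau)
    by_cases hat : IsMAtom M a
    · exact Submonoid.subset_closure (Or.inl hat)
    · have hex : ∃ c d : H, c ∈ M ∧ d ∈ M ∧ a = c * d ∧ ¬ IsUnit c ∧ ¬ IsUnit d := by
        by_contra hno
        push_neg at hno
        refine hat ⟨haM, hau, fun c d hc hd heq => ?_⟩
        by_cases hcu : IsUnit c
        · exact Or.inl hcu
        · exact Or.inr (hno c d hc hd heq hcu)
      obtain ⟨c, d, hcM, hdM, heq, hcu, hdu⟩ := hex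
      obtain ⟨m, hm, hFd⟩ := Fact.of_mul_left hfact (heq ▸ hF) hcu
      obtain ⟨m', hm', hFc⟩ := Fact.of_mul_left hfact (show Fact n (d * c) from mul_comm c d ▸ heq ▸ hF) hdu
      rw [heq]
      exact Submonoid.mul_mem _ (ih m' hm' c hFc hcM) (ih m hm d hFd hdM)


omit hfact in
include hunits in
theorem IsMAtom.congr {a b : H} (hab : Associated a b) (ha : IsMAtom M a) : IsMAtom M b := by
  obtain ⟨u, rfl⟩ := hab
  refine ⟨M.mul_mem ha.1 (hunits _ u.isUnit), fun h => ha.2.1 (isUnit_of_mul_isUnit_left h), ?_⟩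
  intro c d hc hd heq
  have hkey : a = c * (d * ↑u⁻¹) := by
    have h0 : a * ↑u * ↑u⁻¹ = a := by simp
    rw [← h0, heq, mul_assoc]
  rcases ha.2.2 c (d * ↑u⁻¹) hc (M.mul_mem hd (hunits _ (Units.isUnit _))) hkey with h | h
  · exact Or.inl h
  · exact Or.inr (isUnit_of_mul_isUnit_left h)

theorem split_multiset (B : Set H) :
    ∀ l : Multiset H, (∀ z ∈ l, z ∈ B ∪ {u : H | IsUnit u}) →
    ∃ (m : Multiset H) (u : H), (∀ b ∈ m, b ∈ B) ∧ IsUnit u ∧ l.prod = u * m.prod := by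
  intro l
  induction l using Multiset.induction_on with
  | empty => exact fun _ => ⟨0, 1, by simp, isUnit_one, by simp⟩
  | cons z l ih =>
    intro h
    obtain ⟨m, u, hm, hu, hprod⟩ := ih (fun y hy => h y (Multiset.mem_cons_of_mem hy))
    rcases h z (Multiset.mem_cons_self z l) with hz | hz
    · refine ⟨z ::ₘ m, u, ?_, hu, ?_⟩
      · intro b hb
        rcases Multiset.mem_cons.mp hb with rfl | hb'
        · exact hz
        · exact hm b hb'
      · rw [Multiset.prod_cons, Multiset.prod_cons, hprod]
        ac_rfl
    · exact ⟨m, z * u, hm, hz.mul hu, by rw [Multiset.prod_cons, hprod, mul_assoc]⟩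

theorem sf_prod (B : Set H) (hB1 : ∀ b ∈ B, Squarefree b ∧ ¬ IsUnit b)
    (hB2 : ∀ b ∈ B, ∀ c ∈ B, b ≠ c → IsRelPrime b c) :
    ∀ m : Multiset H, (∀ b ∈ m, b ∈ B) → m.Nodup → Squarefree m.prod := by
  intro m
  induction m using Multiset.induction_on with
  | empty => exact fun _ _ => by simpa using squarefree_one
  | cons b s ih =>
    intro hmem hnd
    rw [Multiset.prod_cons]
    have hbB := hmem b (Multiset.mem_cons_self b s)
    obtain ⟨hbs, hnd'⟩ := Multiset.nodup_cons.mp hnd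
    have hsf := ih (fun c hc => hmem c (Multiset.mem_cons_of_mem hc)) hnd'
    apply sf_mul hfact (hB1 b hbB).1 hsf
    apply isRelPrime_of_no_common_pr hfact
    intro p hp hpb hps
    obtain ⟨c, hcmem, hpc⟩ := hp.exists_mem_of_dvd_prod hps
    have hcB := hmem c (Multiset.mem_cons_of_mem hcmem)
    have hbc : b ≠ c := fun h => hbs (h ▸ hcmem)
    exact hp.not_unit (hB2 b hbB c hcB hbc hpb hpc)

omit hfact in
theorem exists_dup_of_not_nodup {m : Multiset H} (h : ¬ m.Nodup) :
    ∃ b t, m = b ::ₘ b ::ₘ t := by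
  classical
  rw [Multiset.nodup_iff_count_le_one] at h
  push_neg at h
  obtain ⟨b, hb⟩ := h
  have h2 : 2 ≤ Multiset.count b m := hb
  obtain ⟨t, ht⟩ := Multiset.le_iff_exists_add.mp (Multiset.le_count_iff_replicate_le.mp h2)
  refine ⟨b, t, ?_⟩
  rw [ht]
  simp [Multiset.replicate_succ]

end SF12

theorem stmt_12 {H : Type*} [CancelCommMonoid H]
    (hfact : ∀ a : H, IsUnit a ∨ ∃ l : Multiset H, (∀ p ∈ l, ¬ IsUnit p ∧ ∀ b c : H, p ∣ b * c → p ∣ b ∨ p ∣ c) ∧ l.prod = a)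
    (M : Submonoid H) (hunits : ∀ u : H, IsUnit u → u ∈ M) :
    (∀ a ∈ M, (¬ ∃ b c : H, b ∈ M ∧ c ∈ M ∧ ¬ IsUnit b ∧ a = b ^ 2 * c) →
      Squarefree a) ↔
    (∃ B : Set H, (∀ b ∈ B, Squarefree b ∧ ¬ IsUnit b) ∧
      (∀ b ∈ B, ∀ c ∈ B, b ≠ c → IsRelPrime b c) ∧
      M = Submonoid.closure (B ∪ {u : H | IsUnit u})) := by
  have hfact' : ∀ a : H, IsUnit a ∨ ∃ l : Multiset H, (∀ p ∈ l, SF12.Pr p) ∧ l.prod = a := hfact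
  constructor
  · intro hsf
    classical
    refine ⟨{b : H | SF12.IsMAtom M b ∧ Quot.out (Associates.mk b) = b}, ?_, ?_, ?_⟩
    · intro b hb
      exact ⟨SF12.atom_sf M hsf hb.1, hb.1.2.1⟩
    · intro b hb c hc hbc
      apply SF12.atoms_relprime hfact' M hunits hsf hb.1 hc.1
      intro hassoc
      exact hbc (by
        rw [← hb.2, ← hc.2]
        exact congrArg Quot.out (Associates.mk_eq_mk_iff_associated.mpr hassoc))
    · apply le_antisymm
      · intro a haM
        obtain ⟨n, hF⟩ := SF12.exists_fact hfact' a
        have h1 := SF12.mem_closure_atoms hfact' M n a hF haM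
        refine Submonoid.closure_le.mpr ?_ h1
        rintro z (hz | hz)
        · have hassoc : Associated (Quot.out (Associates.mk z)) z := Associates.mk_quot_out z
          have hrA : SF12.IsMAtom M (Quot.out (Associates.mk z)) :=
            SF12.IsMAtom.congr M hunits hassoc.symm hz
          have hrB : Quot.out (Associates.mk z) ∈
              {b : H | SF12.IsMAtom M b ∧ Quot.out (Associates.mk b) = b} := by
            refine ⟨hrA, ?_⟩
            rw [Associates.mk_eq_mk_iff_associated.mpr hassoc]
          obtain ⟨u, hu⟩ := hassoc
          rw [← hu]
          exact Submonoid.mul_mem _ (Submonoid.subset_closure (Or.inl hrB))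
            (Submonoid.subset_closure (Or.inr u.isUnit))
        · exact Submonoid.subset_closure (Or.inr hz)
      · apply Submonoid.closure_le.mpr
        rintro z (hz | hz)
        · exact hz.1.1
        · exact hunits z hz
  · rintro ⟨B, hB1, hB2, hMeq⟩ a haM hnd
    have haC : a ∈ Submonoid.closure (B ∪ {u : H | IsUnit u}) := hMeq ▸ haM
    obtain ⟨l, hl, hlprod⟩ := Submonoid.exists_multiset_of_mem_closure haC
    obtain ⟨m, u, hm, hu, hprod⟩ := SF12.split_multiset hfact' B l hl
    have hBM : ∀ b ∈ B, b ∈ M := fun b hb => by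
      rw [hMeq]; exact Submonoid.subset_closure (Or.inl hb)
    have hnodup : m.Nodup := by
      by_contra h
      obtain ⟨b, t, rfl⟩ := SF12.exists_dup_of_not_nodup h
      apply hnd
      have hbm : b ∈ b ::ₘ b ::ₘ t := Multiset.mem_cons_self _ _
      refine ⟨b, u * t.prod, hBM b (hm b hbm), M.mul_mem (hunits u hu)
        (Submonoid.multiset_prod_mem M t fun c hc => hBM c
          (hm c (Multiset.mem_cons_of_mem (Multiset.mem_cons_of_mem hc)))),
        (hB1 b (hm b hbm)).2, ?_⟩
      rw [← hlprod, hprod, Multiset.prod_cons, Multiset.prod_cons, pow_two]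
      ac_rfl
    have hsfm : Squarefree m.prod := SF12.sf_prod hfact' B hB1 hB2 m hm hnodup
    obtain ⟨v, rfl⟩ := hu
    intro y hy
    apply hsfm y
    obtain ⟨r, hr⟩ := hy
    refine ⟨↑v⁻¹ * r, ?_⟩
    have key2 : (↑v : H) * (y * y * (↑v⁻¹ * r)) = y * y * r := by
      rw [show (↑v : H) * (y * y * (↑v⁻¹ * r)) = ((v : H) * ↑v⁻¹) * (y * y * r) from by ac_rfl,
        Units.mul_inv, one_mul]
    have key : (↑v : H) * m.prod = (↑v : H) * (y * y * (↑v⁻¹ * r)) := by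
      rw [key2, ← hr, ← hlprod, hprod]
    exact mul_left_cancel key
end

section
/- Let H be a commutative cancellative monoid, and let r₁,…,rₙ and t₁,…,tₙ be radical elements of H with rᵢ dividing rᵢ₊₁ and tᵢ dividing tᵢ₊₁ for i = 1,…,n−1. If the products r₁·r₂·⋯·rₙ and t₁·t₂·⋯·tₙ are associated, then rᵢ is associated to tᵢ for every i = 1,…,n. -/
private lemma chain_dvd' {H : Type*} [Monoid H] {n : ℕ} (r : Fin n → H)
    (hrd : ∀ i : ℕ, ∀ h : i + 1 < n, r ⟨i, Nat.lt_of_succ_lt h⟩ ∣ r ⟨i + 1, h⟩) :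
    ∀ i j : Fin n, i ≤ j → r i ∣ r j := by
  intro i j hij
  obtain ⟨k, hk⟩ : ∃ k, (j : ℕ) = i + k := ⟨j - i, by omega⟩
  have hjn := j.isLt
  clear hij
  induction k generalizing j with
  | zero =>
    have : j = i := by ext; omega
    simp [this]
  | succ k ihk =>
    have hk' : (i : ℕ) + k < n := by omega
    refine dvd_trans (ihk ⟨(i : ℕ) + k, hk'⟩ rfl hk') ?_
    have : j = ⟨(i : ℕ) + k + 1, by omega⟩ := by ext; simp; omega
    rw [this]
    exact hrd _ _

private lemma assoc_cancel' {H : Type*} [CancelCommMonoid H] {a b c d : H}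
    (h : Associated (a * c) (b * d)) (h2 : Associated c d) : Associated a b := by
  obtain ⟨u, hu⟩ := h
  obtain ⟨v, hv⟩ := h2
  refine ⟨u * v⁻¹, ?_⟩
  have key : a * ↑u * c = b * ↑v * c := by
    have h1 : a * c * ↑u = b * (c * ↑v) := by rw [hv]; exact hu
    calc a * ↑u * c = a * c * ↑u := by rw [mul_right_comm]
      _ = b * (c * ↑v) := h1
      _ = b * ↑v * c := by rw [mul_comm c, mul_assoc]
  have key2 : a * ↑u = b * ↑v := mul_right_cancel key
  calc a * ↑(u * v⁻¹) = a * ↑u * ↑v⁻¹ := by rw [Units.val_mul, mul_assoc]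
    _ = b * ↑v * ↑v⁻¹ := by rw [key2]
    _ = b := by rw [mul_assoc, Units.mul_inv, mul_one]

private lemma assoc_of_dvd_dvd' {H : Type*} [CancelCommMonoid H] {a b : H}
    (h1 : a ∣ b) (h2 : b ∣ a) : Associated a b := by
  obtain ⟨c, hc⟩ := h1
  obtain ⟨d, hd⟩ := h2
  have key : a * (c * d) = a * 1 := by rw [← mul_assoc, ← hc, ← hd, mul_one]
  exact ⟨Units.mkOfMulEqOne c d (mul_left_cancel key), hc.symm⟩

theorem stmt_15 {H : Type*} [CancelCommMonoid H] {n : ℕ}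
    (r t : Fin n → H) (hr : ∀ i, IsRadical (r i)) (ht : ∀ i, IsRadical (t i))
    (hrd : ∀ i : ℕ, ∀ h : i + 1 < n, r ⟨i, Nat.lt_of_succ_lt h⟩ ∣ r ⟨i + 1, h⟩)
    (htd : ∀ i : ℕ, ∀ h : i + 1 < n, t ⟨i, Nat.lt_of_succ_lt h⟩ ∣ t ⟨i + 1, h⟩)
    (hassoc : Associated (∏ i, r i) (∏ i, t i)) :
    ∀ i, Associated (r i) (t i) := by
  induction n with
  | zero => exact fun i => i.elim0
  | succ n ih =>
    -- products divide powers of last element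
    have hrpow : (∏ i, r i) ∣ r (Fin.last n) ^ (n + 1) := by
      have := Finset.prod_dvd_prod_of_dvd (s := Finset.univ) r
        (fun _ => r (Fin.last n))
        (fun i _ => chain_dvd' r hrd i (Fin.last n) (Fin.le_last i))
      simpa using this
    have htpow : (∏ i, t i) ∣ t (Fin.last n) ^ (n + 1) := by
      have := Finset.prod_dvd_prod_of_dvd (s := Finset.univ) t
        (fun _ => t (Fin.last n))
        (fun i _ => chain_dvd' t htd i (Fin.last n) (Fin.le_last i))
      simpa using this
    have hlast : Associated (r (Fin.last n)) (t (Fin.last n)) := by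
      have h1 : r (Fin.last n) ∣ t (Fin.last n) ^ (n + 1) :=
        dvd_trans (Finset.dvd_prod_of_mem r (Finset.mem_univ _))
          (dvd_trans hassoc.dvd htpow)
      have h2 : t (Fin.last n) ∣ r (Fin.last n) ^ (n + 1) :=
        dvd_trans (Finset.dvd_prod_of_mem t (Finset.mem_univ _))
          (dvd_trans hassoc.symm.dvd hrpow)
      exact assoc_of_dvd_dvd' (hr _ _ _ h1) (ht _ _ _ h2)
    -- cancel the last factor
    have hprods : Associated (∏ i : Fin n, r i.castSucc) (∏ i : Fin n, t i.castSucc) := by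
      apply assoc_cancel' (d := t (Fin.last n)) (c := r (Fin.last n)) _ hlast
      rwa [← Fin.prod_univ_castSucc, ← Fin.prod_univ_castSucc]
    have hmain := ih (fun i => r i.castSucc) (fun i => t i.castSucc)
      (fun i => hr _) (fun i => ht _)
      (fun i h => by
        have : (⟨i, Nat.lt_of_succ_lt h⟩ : Fin n).castSucc = ⟨i, by omega⟩ := rfl
        exact hrd i (by omega))
      (fun i h => htd i (by omega))
      hprods
    intro i
    rcases eq_or_lt_of_le (Nat.lt_succ_iff.mp i.isLt) with hi | hi
    · have : i = Fin.last n := by ext; exact hi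
      rw [this]; exact hlast
    · have : i = (⟨i, hi⟩ : Fin n).castSucc := by ext; rfl
      rw [this]; exact hmain ⟨i, hi⟩
end

section
/- Let H be a commutative cancellative GCD monoid, and let s₀,…,sₙ and t₀,…,tₙ be square-free elements of H. If s₀·s₁²·s₂^(2²)·⋯·sₙ^(2ⁿ) is associated to t₀·t₁²·t₂^(2²)·⋯·tₙ^(2ⁿ), then sᵢ is associated to tᵢ for every i = 0,…,n. -/
section Aux

variable {H : Type*} [CancelCommMonoid H]

private lemma coe_dvd_coe {a b : H} : (↑a : WithZero H) ∣ ↑b ↔ a ∣ b := by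
  constructor
  · rintro ⟨c, hc⟩
    induction c with
    | zero => simp at hc
    | coe c =>
      rw [← WithZero.coe_mul, WithZero.coe_inj] at hc
      exact ⟨c, hc⟩
  · rintro ⟨c, rfl⟩
    exact ⟨c, by rw [WithZero.coe_mul]⟩

instance : IsCancelMulZero (WithZero H) :=
  haveI : IsLeftCancelMulZero (WithZero H) :=
   { mul_left_cancel_of_ne_zero := by
      intro a ha b c (h : a * b = a * c)
      induction a with
      | zero => exact absurd rfl ha
      | coe a =>
        induction b with
        | zero =>
          rw [mul_zero] at h
          exact ((mul_eq_zero.mp h.symm).resolve_left ha).symm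
        | coe b =>
          induction c with
          | zero =>
            rw [mul_zero] at h
            exact absurd h (by rw [← WithZero.coe_mul]; exact WithZero.coe_ne_zero)
          | coe c =>
            rw [← WithZero.coe_mul, ← WithZero.coe_mul, WithZero.coe_inj] at h
            rw [WithZero.coe_inj]
            exact mul_left_cancel h }
  IsLeftCancelMulZero.to_isCancelMulZero

private lemma squarefree_coe {a : H} (h : Squarefree a) : Squarefree (↑a : WithZero H) := by
  intro d hd
  induction d with
  | zero =>
    rw [mul_zero, zero_dvd_iff] at hd
    exact absurd hd WithZero.coe_ne_zero
  | coe e =>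
    rw [← WithZero.coe_mul] at hd
    exact (h e (coe_dvd_coe.mp hd)).map (WithZero.coeMonoidHom)

private lemma assoc_of_coe {a b : H} (h : Associated (↑a : WithZero H) ↑b) :
    Associated a b := by
  obtain ⟨c, rfl⟩ := coe_dvd_coe.mp h.dvd
  obtain ⟨d, hd⟩ := coe_dvd_coe.mp h.symm.dvd
  have hcd : c * d = 1 := mul_left_cancel (a := a) (by rw [← mul_assoc, ← hd, mul_one])
  exact ⟨Units.mkOfMulEqOne c d hcd, rfl⟩

end Aux

private theorem key_step {α : Type*} [CommMonoidWithZero α] [IsCancelMulZero α] [GCDMonoid α]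
    {s t x y : α} (hs : Squarefree s) (ht : Squarefree t)
    (hx : x ≠ 0) (hy : y ≠ 0)
    (h : Associated (s * x ^ 2) (t * y ^ 2)) :
    Associated s t ∧ Associated x y := by
  obtain ⟨x₁, y₁, hx₁, hy₁, hu⟩ := extract_gcd x y
  set g := gcd x y with hg
  have hg0 : g ≠ 0 := fun h0 => hx (by rw [hx₁, h0, zero_mul])
  have e1 : s * x ^ 2 = g ^ 2 * (s * x₁ ^ 2) := by
    rw [hx₁, mul_pow, mul_left_comm]
  have e2 : t * y ^ 2 = g ^ 2 * (t * y₁ ^ 2) := by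
    rw [hy₁, mul_pow, mul_left_comm]
  rw [e1, e2] at h
  have h3 : Associated (s * x₁ ^ 2) (t * y₁ ^ 2) :=
    h.of_mul_left (Associated.refl _) (pow_ne_zero 2 hg0)
  have hrel : IsRelPrime x₁ y₁ := fun d hdx hdy =>
    isUnit_of_dvd_unit (dvd_gcd hdx hdy) hu
  have hy₁u : IsUnit y₁ := by
    have hdvd : y₁ ^ 2 ∣ s * x₁ ^ 2 := (dvd_mul_left _ _).trans h3.symm.dvd
    have : y₁ ^ 2 ∣ s := (hrel.symm.pow).dvd_of_dvd_mul_right hdvd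
    exact hs y₁ (by rwa [← sq])
  have hx₁u : IsUnit x₁ := by
    have hdvd : x₁ ^ 2 ∣ t * y₁ ^ 2 := (dvd_mul_left _ _).trans h3.dvd
    have : x₁ ^ 2 ∣ t := (hrel.pow).dvd_of_dvd_mul_right hdvd
    exact ht x₁ (by rwa [← sq])
  constructor
  · exact ((associated_mul_unit_right s _ (hx₁u.pow 2)).trans h3).trans
      (associated_mul_unit_right t _ (hy₁u.pow 2)).symm
  · rw [hx₁, hy₁]
    exact (associated_mul_unit_right g x₁ hx₁u).symm.trans
      (associated_mul_unit_right g y₁ hy₁u)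

private theorem aux_ind {α : Type*} [CommMonoidWithZero α] [IsCancelMulZero α] [GCDMonoid α] [Nontrivial α] :
    ∀ (n : ℕ) (s t : Fin (n + 1) → α), (∀ i, Squarefree (s i)) → (∀ i, Squarefree (t i)) →
      Associated (∏ i, s i ^ 2 ^ i.val) (∏ i, t i ^ 2 ^ i.val) →
      ∀ i, Associated (s i) (t i) := by
  intro n
  induction n with
  | zero =>
    intro s t hs ht h i
    have h0 : Associated (s 0) (t 0) := by
      simpa [Fin.prod_univ_one] using h
    have : i = 0 := Fin.eq_zero i
    rwa [this]
  | succ n ih =>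
    intro s t hs ht h i
    have hprod : ∀ (f : Fin (n + 2) → α),
        ∏ j, f j ^ 2 ^ (j : ℕ) = f 0 * (∏ j : Fin (n + 1), f j.succ ^ 2 ^ (j : ℕ)) ^ 2 := by
      intro f
      rw [Fin.prod_univ_succ, ← Finset.prod_pow]
      congr 1
      · simp
      · refine Finset.prod_congr rfl fun j _ => ?_
        rw [← pow_mul, Fin.val_succ, pow_succ]
    rw [hprod s, hprod t] at h
    have hx : (∏ j : Fin (n + 1), s j.succ ^ 2 ^ (j : ℕ)) ≠ 0 :=
      Finset.prod_ne_zero_iff.mpr fun j _ => pow_ne_zero _ (hs j.succ).ne_zero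
    have hy : (∏ j : Fin (n + 1), t j.succ ^ 2 ^ (j : ℕ)) ≠ 0 :=
      Finset.prod_ne_zero_iff.mpr fun j _ => pow_ne_zero _ (ht j.succ).ne_zero
    obtain ⟨h0, hrest⟩ := key_step (hs 0) (ht 0) hx hy h
    have := ih (fun j => s j.succ) (fun j => t j.succ) (fun j => hs j.succ)
      (fun j => ht j.succ) hrest
    refine Fin.cases h0 (fun j => this j) i

theorem stmt_17 {H : Type*} [CancelCommMonoid H]
    (hgcd : ∀ a b : H, ∃ d : H, d ∣ a ∧ d ∣ b ∧ ∀ c : H, c ∣ a → c ∣ b → c ∣ d)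
    {n : ℕ} (s t : Fin (n + 1) → H)
    (hs : ∀ i, Squarefree (s i)) (ht : ∀ i, Squarefree (t i))
    (hassoc : Associated (∏ i, (s i) ^ (2 ^ i.val)) (∏ i, (t i) ^ (2 ^ i.val))) :
    ∀ i, Associated (s i) (t i) := by
  classical
  letI : GCDMonoid (WithZero H) := by
    refine gcdMonoidOfExistsGCD fun a b => ?_
    induction a with
    | zero => exact ⟨b, fun d => ⟨fun hd => hd.2, fun hd => ⟨dvd_zero d, hd⟩⟩⟩
    | coe a =>
      induction b with
      | zero => exact ⟨↑a, fun d => ⟨fun hd => hd.1, fun hd => ⟨hd, dvd_zero d⟩⟩⟩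
      | coe b =>
        obtain ⟨g, hga, hgb, hgmax⟩ := hgcd a b
        refine ⟨↑g, fun d => ?_⟩
        induction d with
        | zero =>
          simp only [zero_dvd_iff]
          exact ⟨fun hd => absurd hd.1 WithZero.coe_ne_zero,
            fun hd => absurd hd WithZero.coe_ne_zero⟩
        | coe e =>
          rw [coe_dvd_coe, coe_dvd_coe, coe_dvd_coe]
          exact ⟨fun hd => hgmax e hd.1 hd.2,
            fun hd => ⟨hd.trans hga, hd.trans hgb⟩⟩
  intro i
  apply assoc_of_coe
  have hcast : ∀ (f : Fin (n + 1) → H),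
      ((∏ j, f j ^ 2 ^ (j : ℕ) : H) : WithZero H) = ∏ j, (f j : WithZero H) ^ 2 ^ (j : ℕ) := by
    intro f
    exact map_prod (WithZero.coeMonoidHom) (fun j => f j ^ 2 ^ (j : ℕ)) Finset.univ
  refine aux_ind (α := WithZero H) n (fun j => ↑(s j)) (fun j => ↑(t j)) (fun j => squarefree_coe (hs j))
    (fun j => squarefree_coe (ht j)) ?_ i
  rw [← hcast, ← hcast]
  obtain ⟨u, hu⟩ := hassoc
  exact ⟨Units.map WithZero.coeMonoidHom u, by
    rw [← hu, WithZero.coe_mul]; rfl⟩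
end
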